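/- Let H : ℝ^d → ℝ be three times continuously differentiable and let ∇̄H : ℝ^d × ℝ^d → ℝ^d satisfy the discrete gradient condition, with y ↦ ∇̄H(x,y) twice continuously differentiable. Define Q(x,y) = ½((D₂∇̄H(x,y))ᵀ − D₂∇̄H(x,y)). Then for all x, v ∈ ℝ^d, D₂Q(x,x)(v,v) = ¼ D²∇H(x)(v,v) − ¾ D₂²∇̄H(x,x)(v,v), where D₂Q(x,x)(v,v) ∈ ℝ^d denotes the derivative of y ↦ Q(x,y) at y = x in the direction v, applied as a matrix to v, D²∇H(x)(v,v) ∈ ℝ^d is the second derivative of ∇H at x evaluated at (v,v), and D₂²∇̄H(x,x)(v,v) ∈ ℝ^d is the second derivative of y ↦ ∇̄H(x,y) at y = x evaluated at (v,v). -/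

import Mathlib

open scoped RealInnerProductSpace

/-- The skew-symmetric part `Q(x,y) = ½((D₂∇̄H(x,y))ᵀ − D₂∇̄H(x,y))` of the Jacobian of a
discrete gradient with respect to its second argument (the transpose is the adjoint). -/
noncomputable def dgQ {d : ℕ}
    (dg : EuclideanSpace ℝ (Fin d) → EuclideanSpace ℝ (Fin d) → EuclideanSpace ℝ (Fin d))
    (x y : EuclideanSpace ℝ (Fin d)) :
    EuclideanSpace ℝ (Fin d) →L[ℝ] EuclideanSpace ℝ (Fin d) :=
  (2 : ℝ)⁻¹ • (ContinuousLinearMap.adjoint (fderiv ℝ (dg x) y) - fderiv ℝ (dg x) y)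

variable {E : Type*} [NormedAddCommGroup E] [InnerProductSpace ℝ E]

/-- derivative of `y ↦ ⟪f y, y - x⟫` at `x`, only needing continuity of `f`. -/
lemma hasFDerivAt_inner_sub {f : E → E} {x : E} (hf : ContinuousAt f x) :
    HasFDerivAt (fun y => ⟪f y, y - x⟫) (innerSL ℝ (f x)) x := by
  rw [hasFDerivAt_iff_isLittleO_nhds_zero]
  have he : (fun h => ⟪f (x + h), x + h - x⟫ - ⟪f x, x - x⟫ - (innerSL ℝ (f x)) h) =
      fun h => ⟪f (x + h) - f x, h⟫ := by
    funext h; simp [inner_sub_left]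
  rw [he, Asymptotics.isLittleO_iff]
  intro c hc
  have ht : Filter.Tendsto (fun h => f (x + h) - f x) (nhds 0) (nhds 0) := by
    have h1 : Filter.Tendsto (fun h : E => x + h) (nhds 0) (nhds (x + 0)) :=
      (Filter.tendsto_id (α := E)).const_add x
    rw [add_zero] at h1
    have h2 := (hf.tendsto.comp h1).sub (tendsto_const_nhds (x := f x))
    simpa using h2
  filter_upwards [Metric.tendsto_nhds.1 ht c hc] with h hy
  calc ‖⟪f (x + h) - f x, h⟫‖ ≤ ‖f (x + h) - f x‖ * ‖h‖ := norm_inner_le_norm _ _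
    _ ≤ c * ‖h‖ := by
        refine mul_le_mul_of_nonneg_right ?_ (norm_nonneg _)
        simpa [dist_zero_right] using hy.le

variable [CompleteSpace E]

/-- The adjoint, as a continuous linear map on continuous linear maps. -/
noncomputable def adjCLM (E : Type*) [NormedAddCommGroup E] [InnerProductSpace ℝ E]
    [CompleteSpace E] : (E →L[ℝ] E) →L[ℝ] (E →L[ℝ] E) :=
  LinearMap.mkContinuous
    { toFun := ContinuousLinearMap.adjoint
      map_add' := fun A B => map_add ContinuousLinearMap.adjoint A B
      map_smul' := fun r A => by
        simpa [starRingEnd_apply] using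
          LinearIsometryEquiv.map_smulₛₗ ContinuousLinearMap.adjoint r A }
    1 (fun A => by simp [LinearIsometryEquiv.norm_map])

@[simp] lemma adjCLM_apply (A : E →L[ℝ] E) :
    adjCLM E A = ContinuousLinearMap.adjoint A := rfl

/-- `(toDual ℝ E).symm` as a continuous linear map. -/
noncomputable def toDualSymmCLM (E : Type*) [NormedAddCommGroup E] [InnerProductSpace ℝ E]
    [CompleteSpace E] : StrongDual ℝ E →L[ℝ] E :=
  LinearMap.mkContinuous
    { toFun := fun ℓ => (InnerProductSpace.toDual ℝ E).symm ℓ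
      map_add' := fun a b => map_add _ a b
      map_smul' := fun r a => by
        simpa [starRingEnd_apply] using
          (InnerProductSpace.toDual ℝ E).symm.map_smulₛₗ r a }
    1 (fun a => by simp [LinearIsometryEquiv.norm_map])

@[simp] lemma toDualSymmCLM_apply (ℓ : StrongDual ℝ E) :
    toDualSymmCLM E ℓ = (InnerProductSpace.toDual ℝ E).symm ℓ := rfl

set_option maxHeartbeats 4000000 in
/-- `D₂Q(x,x)(v,v) = ¼ D²∇H(x)(v,v) − ¾ D₂²∇̄H(x,x)(v,v)`. -/
theorem deriv_Q_eq_quarter_third_deriv_sub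
    (d : ℕ) (H : EuclideanSpace ℝ (Fin d) → ℝ) (hH : ContDiff ℝ 3 H)
    (dg : EuclideanSpace ℝ (Fin d) → EuclideanSpace ℝ (Fin d) → EuclideanSpace ℝ (Fin d))
    (hdg : ∀ x y, ⟪dg x y, y - x⟫ = H y - H x)
    (hdg2 : ∀ x, ContDiff ℝ 2 (dg x)) :
    ∀ (x v : EuclideanSpace ℝ (Fin d)),
      (fderiv ℝ (fun y => dgQ dg x y) x v) v =
        (4 : ℝ)⁻¹ • iteratedFDeriv ℝ 2 (gradient H) x (fun _ => v)
          - (3 / 4 : ℝ) • iteratedFDeriv ℝ 2 (dg x) x (fun _ => v) := by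
  intro x v
  have hg2 : ContDiff ℝ 2 (dg x) := hdg2 x
  have hgd : Differentiable ℝ (dg x) := hg2.differentiable (by norm_num)
  have hA : ContDiff ℝ 1 (fderiv ℝ (dg x)) := hg2.fderiv_right (by norm_num)
  have hAd : Differentiable ℝ (fderiv ℝ (dg x)) := hA.differentiable (by norm_num)
  have hAc : Continuous (fderiv ℝ (fderiv ℝ (dg x))) :=
    (hA.fderiv_right (m := 0) (by norm_num)).continuous
  have hH1 : ContDiff ℝ 2 (fderiv ℝ H) := hH.fderiv_right (by norm_num)
  have hH1d : Differentiable ℝ (fderiv ℝ H) := hH1.differentiable (by norm_num)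
  have hH2 : ContDiff ℝ 1 (fderiv ℝ (fderiv ℝ H)) := hH1.fderiv_right (by norm_num)
  have hH2d : Differentiable ℝ (fderiv ℝ (fderiv ℝ H)) := hH2.differentiable (by norm_num)
  -- the second-derivative CLMs we care about
  set B : EuclideanSpace ℝ (Fin d) →L[ℝ]
      (EuclideanSpace ℝ (Fin d) →L[ℝ] EuclideanSpace ℝ (Fin d)) :=
    fderiv ℝ (fderiv ℝ (dg x)) x with hB
  set D3 := fderiv ℝ (fderiv ℝ (fderiv ℝ H)) x with hD3
  -- Step 1 : first derivative of the discrete gradient identity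
  have key1 : ∀ y z, ⟪dg x y, z⟫ + ⟪fderiv ℝ (dg x) y z, y - x⟫ = fderiv ℝ H y z := by
    intro y z
    have e1 : (fun y' => ⟪dg x y', y' - x⟫) = fun y' => H y' - H x :=
      funext fun y' => hdg x y'
    have hsub : DifferentiableAt ℝ (fun y' : EuclideanSpace ℝ (Fin d) => y' - x) y :=
      (differentiable_id.sub_const x) y
    have hfd := fderiv_inner_apply (𝕜 := ℝ) (hgd y) hsub z
    rw [e1] at hfd
    simp only [fderiv_sub_const, fderiv_id', ContinuousLinearMap.coe_id', id_eq] at hfd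
    linarith [hfd]
  -- derivative of `y ↦ A y z` style maps
  have hApply : ∀ (z y : EuclideanSpace ℝ (Fin d)),
      HasFDerivAt (fun y' => fderiv ℝ (dg x) y' z)
        ((ContinuousLinearMap.apply ℝ (EuclideanSpace ℝ (Fin d)) z).comp
          (fderiv ℝ (fderiv ℝ (dg x)) y)) y := by
    intro z y
    exact (ContinuousLinearMap.apply ℝ (EuclideanSpace ℝ (Fin d)) z).hasFDerivAt.comp y
      (hAd y).hasFDerivAt
  have hHApply : ∀ (z y : EuclideanSpace ℝ (Fin d)),
      HasFDerivAt (fun y' => fderiv ℝ H y' z)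
        ((ContinuousLinearMap.apply ℝ ℝ z).comp (fderiv ℝ (fderiv ℝ H) y)) y := by
    intro z y
    exact (ContinuousLinearMap.apply ℝ ℝ z).hasFDerivAt.comp y (hH1d y).hasFDerivAt
  -- Step 2 : second derivative of the identity, still as a function of y
  have key2 : ∀ (y u z : EuclideanSpace ℝ (Fin d)),
      ⟪(fderiv ℝ (fderiv ℝ (dg x)) y u) z, y - x⟫ + ⟪fderiv ℝ (dg x) y z, u⟫
        + ⟪fderiv ℝ (dg x) y u, z⟫ = (fderiv ℝ (fderiv ℝ H) y u) z := by
    intro y u z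
    have hF1a := (hgd y).hasFDerivAt.inner ℝ (hasFDerivAt_const z y)
    have hF1b := (hApply z y).inner ℝ ((hasFDerivAt_id y).sub_const x)
    have hEq : (fun y' => ⟪dg x y', z⟫ + ⟪fderiv ℝ (dg x) y' z, y' - x⟫)
        = fun y' => fderiv ℝ H y' z := funext fun y' => key1 y' z
    have hsum := hF1a.add hF1b
    simp only [id_eq, Pi.add_def] at hsum
    rw [hEq] at hsum
    have hU := (hHApply z y).unique hsum
    have := congrArg (fun (L : EuclideanSpace ℝ (Fin d) →L[ℝ] ℝ) => L u) hU
    simp only [ContinuousLinearMap.coe_comp', Function.comp_apply,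
      ContinuousLinearMap.add_apply, ContinuousLinearMap.comp_apply,
      fderivInnerCLM_apply, ContinuousLinearMap.prod_apply,
      ContinuousLinearMap.coe_zero', Pi.zero_apply, inner_zero_right,
      ContinuousLinearMap.apply_apply, ContinuousLinearMap.coe_sub',
      Pi.sub_apply, ContinuousLinearMap.coe_id', id_eq, zero_add] at this
    linarith [this]
  -- Step 3 : differentiate key2 (with u = v) at y = x in direction v
  have key3 : ∀ z : EuclideanSpace ℝ (Fin d),
      ⟪(B v) z, v⟫ + (⟪(B v) z, v⟫ + ⟪(B v) v, z⟫) = ((D3 v) v) z := by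
    intro z
    -- term 1 : y ↦ ⟪(D²g y v) z, y - x⟫, via the continuity trick
    have hT1 : HasFDerivAt
        (fun y => ⟪(fderiv ℝ (fderiv ℝ (dg x)) y v) z, y - x⟫)
        (innerSL ℝ ((B v) z)) x := by
      refine hasFDerivAt_inner_sub ?_
      have : Continuous (fun y => (fderiv ℝ (fderiv ℝ (dg x)) y v) z) := by
        exact ((ContinuousLinearMap.apply ℝ (EuclideanSpace ℝ (Fin d)) z).continuous.comp
          ((ContinuousLinearMap.apply ℝ (EuclideanSpace ℝ (Fin d) →L[ℝ]
            EuclideanSpace ℝ (Fin d)) v).continuous.comp hAc))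
      exact this.continuousAt
    -- term 2 : y ↦ ⟪A y z, v⟫
    have hT2 := (hApply z x).inner ℝ (hasFDerivAt_const v x)
    -- term 3 : y ↦ ⟪A y v, z⟫
    have hT3 := (hApply v x).inner ℝ (hasFDerivAt_const z x)
    -- RHS : y ↦ (D²H y v) z
    have hT4 : HasFDerivAt (fun y => (fderiv ℝ (fderiv ℝ H) y v) z)
        (((ContinuousLinearMap.apply ℝ ℝ z).comp
          (ContinuousLinearMap.apply ℝ (EuclideanSpace ℝ (Fin d) →L[ℝ] ℝ) v)).comp D3) x := by
      have h := ((hH2d x).hasFDerivAt.clm_apply (hasFDerivAt_const v x)).clm_apply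
        (hasFDerivAt_const z x)
      convert h using 1
      all_goals try rfl
      ext w; simp [hD3]
    have hEq : (fun y => ⟪(fderiv ℝ (fderiv ℝ (dg x)) y v) z, y - x⟫
          + (⟪fderiv ℝ (dg x) y z, v⟫ + ⟪fderiv ℝ (dg x) y v, z⟫))
        = fun y => (fderiv ℝ (fderiv ℝ H) y v) z := by
      funext y
      have := key2 y v z
      rw [← this]; ring
    have hsum := hT1.add (hT2.add hT3)
    simp only [id_eq, Pi.add_def] at hsum
    rw [hEq] at hsum
    have hU := hT4.unique hsum
    have := congrArg (fun (L : EuclideanSpace ℝ (Fin d) →L[ℝ] ℝ) => L v) hU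
    simp only [ContinuousLinearMap.coe_comp', Function.comp_apply,
      ContinuousLinearMap.add_apply, ContinuousLinearMap.comp_apply,
      fderivInnerCLM_apply, ContinuousLinearMap.prod_apply,
      ContinuousLinearMap.coe_zero', Pi.zero_apply, inner_zero_right,
      ContinuousLinearMap.apply_apply, innerSL_apply_apply, zero_add, add_zero] at this
    linarith [this]
  -- Step 4 : the gradient identity  ⟪D²(∇H)(x)(v,v), z⟫ = D³H(x)(v,v,z)
  have key4 : ∀ z : EuclideanSpace ℝ (Fin d),
      ⟪iteratedFDeriv ℝ 2 (gradient H) x (fun _ => v), z⟫ = ((D3 v) v) z := by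
    intro z
    have hgradfun : gradient H
        = (⇑(toDualSymmCLM (EuclideanSpace ℝ (Fin d)))) ∘ (fderiv ℝ H) :=
      funext fun y => rfl
    have hgrad : ∀ y, HasFDerivAt (gradient H)
        ((toDualSymmCLM (EuclideanSpace ℝ (Fin d))).comp (fderiv ℝ (fderiv ℝ H) y)) y := by
      intro y
      rw [hgradfun]
      exact (toDualSymmCLM (EuclideanSpace ℝ (Fin d))).hasFDerivAt.comp y (hH1d y).hasFDerivAt
    have hgradf : fderiv ℝ (gradient H) = fun y =>
        (ContinuousLinearMap.compL ℝ (EuclideanSpace ℝ (Fin d))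
          (StrongDual ℝ (EuclideanSpace ℝ (Fin d))) (EuclideanSpace ℝ (Fin d))
          (toDualSymmCLM (EuclideanSpace ℝ (Fin d)))) (fderiv ℝ (fderiv ℝ H) y) := by
      funext y
      rw [(hgrad y).fderiv]
      rfl
    have hc : HasFDerivAt (fderiv ℝ (gradient H))
        ((ContinuousLinearMap.compL ℝ (EuclideanSpace ℝ (Fin d))
          (StrongDual ℝ (EuclideanSpace ℝ (Fin d))) (EuclideanSpace ℝ (Fin d))
          (toDualSymmCLM (EuclideanSpace ℝ (Fin d)))).comp D3) x := by
      rw [hgradf]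
      have h := (hasFDerivAt_const (toDualSymmCLM (EuclideanSpace ℝ (Fin d))) x).clm_comp
        (hH2d x).hasFDerivAt
      convert h using 1
      all_goals try rfl
      ext w; simp [hD3]
    rw [iteratedFDeriv_two_apply, hc.fderiv]
    simp only [ContinuousLinearMap.coe_comp', Function.comp_apply,
      ContinuousLinearMap.compL_apply, ContinuousLinearMap.comp_apply, toDualSymmCLM_apply]
    exact InnerProductSpace.toDual_symm_apply
  -- Step 5 : compute the left-hand side
  have hQ : HasFDerivAt (fun y => dgQ dg x y)
      ((2 : ℝ)⁻¹ • ((adjCLM (EuclideanSpace ℝ (Fin d))).comp B - B)) x := by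
    unfold dgQ
    have h1 : HasFDerivAt (fun y => ContinuousLinearMap.adjoint (fderiv ℝ (dg x) y))
        ((adjCLM (EuclideanSpace ℝ (Fin d))).comp B) x := by
      have := (adjCLM (EuclideanSpace ℝ (Fin d))).hasFDerivAt.comp x (hAd x).hasFDerivAt
      refine this.congr_of_eventuallyEq ?_
      filter_upwards with y
      simp
    have h2 : HasFDerivAt (fun y => fderiv ℝ (dg x) y) B x := (hAd x).hasFDerivAt
    exact ((h1.sub h2).const_smul ((2 : ℝ)⁻¹))
  have hLHS : (fderiv ℝ (fun y => dgQ dg x y) x v) v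
      = (2 : ℝ)⁻¹ • (ContinuousLinearMap.adjoint (B v) v - (B v) v) := by
    rw [hQ.fderiv]
    simp [adjCLM_apply]
  -- Step 6 : put everything together
  have hIter2 : iteratedFDeriv ℝ 2 (dg x) x (fun _ => v) = (B v) v := by
    rw [iteratedFDeriv_two_apply]
  rw [hLHS, hIter2]
  apply ext_inner_right ℝ
  intro z
  have h3 := key3 z
  have h4 := key4 z
  have hadj : ⟪ContinuousLinearMap.adjoint (B v) v, z⟫ = ⟪(B v) z, v⟫ := by
    rw [ContinuousLinearMap.adjoint_inner_left]
    exact real_inner_comm _ _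
  simp only [inner_smul_left, inner_sub_left, RCLike.conj_to_real, conj_trivial]
  rw [hadj]
  nlinarith [h3, h4]
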